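/- Let p be an odd prime and q ∈ ℚ_p with |1 − q|_p < 1. For every continuous function f : ℤ_p → ℚ_p such that I_{−q^p}(y ↦ f(p·y)) exists, the limit lim_{N→∞} (1/[p^N]_{−q})·Σ_{y=0}^{p^{N−1}−1} f(p·y)(−q)^{p y} exists and equals ([2]_q/[2]_{q^p})·I_{−q^p}(y ↦ f(p·y)). (This expresses the measure transformation dμ_{−q}(p x) = ([2]_q/[2]_{q^p})·dμ_{−q^p}(x) on the subset pℤ_p.) -/

import Mathlib

open Filter Finset

/-- Measure transformation `dμ₋q(px) = ([2]_q/[2]_{q^p}) dμ₋{q^p}(x)` on `pℤ_p`: for an odd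
prime `p`, `q ∈ ℚ_p` with `|1-q|_p < 1`, and a continuous `f : ℤ_p → ℚ_p` such that the
fermionic `p`-adic `q^p`-integral `I₋{q^p}(y ↦ f(py)) = J` exists, the limit
`lim_N (1/[p^N]₋q) ∑_{y=0}^{p^{N-1}-1} f(py) (-q)^{py}` exists and equals
`([2]_q/[2]_{q^p}) J`. -/
theorem measure_transformation_on_pZp (p : ℕ) [Fact (Nat.Prime p)] (hp : Odd p)
    (q : ℚ_[p]) (hq : ‖1 - q‖ < 1)
    (f : ℤ_[p] → ℚ_[p]) (hf : Continuous f)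
    (J : ℚ_[p])
    (hJ : Tendsto (fun N : ℕ =>
        ((1 + q ^ p) / (1 - (-q ^ p) ^ (p ^ N))) *
          ∑ y ∈ range (p ^ N), f ((p : ℤ_[p]) * (y : ℤ_[p])) * (-q ^ p) ^ y)
      atTop (nhds J)) :
    Tendsto (fun N : ℕ =>
        ((1 + q) / (1 - (-q) ^ (p ^ N))) *
          ∑ y ∈ range (p ^ (N - 1)), f ((p : ℤ_[p]) * (y : ℤ_[p])) * (-q) ^ (p * y))
      atTop (nhds (((1 + q) / (1 + q ^ p)) * J)) := by
  -- ‖q‖ ≤ 1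
  have hq1 : ‖q‖ ≤ 1 := by
    have h : q = 1 + -(1 - q) := by ring
    calc ‖q‖ = ‖(1 : ℚ_[p]) + -(1 - q)‖ := by rw [← h]
      _ ≤ max ‖(1 : ℚ_[p])‖ ‖-(1 - q)‖ := Padic.nonarchimedean _ _
      _ ≤ 1 := by
          rw [norm_neg, norm_one]
          exact max_le le_rfl hq.le
  -- ‖1 - q^p‖ < 1
  have hqp : ‖1 - q ^ p‖ < 1 := by
    have hfac : (1 : ℚ_[p]) - q ^ p = -((∑ i ∈ range p, q ^ i) * (q - 1)) := by
      rw [geom_sum_mul]; ring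
    rw [hfac, norm_neg, norm_mul]
    have hsum : ‖∑ i ∈ range p, q ^ i‖ ≤ 1 :=
      IsUltrametricDist.norm_sum_le_of_forall_le_of_nonneg zero_le_one
        (fun i _ => by simpa using pow_le_one₀ (norm_nonneg q) hq1)
    have h1 : ‖q - 1‖ < 1 := by rw [← norm_neg]; simpa using hq
    calc ‖∑ i ∈ range p, q ^ i‖ * ‖q - 1‖ ≤ 1 * ‖q - 1‖ :=
          mul_le_mul_of_nonneg_right hsum (norm_nonneg _)
      _ < 1 := by simpa using h1
  -- 1 + q^p ≠ 0
  have h2 : (1 : ℚ_[p]) + q ^ p ≠ 0 := by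
    intro h
    have hqpe : q ^ p = -1 := by linear_combination h
    rw [hqpe] at hqp
    have : ‖(2 : ℚ_[p])‖ < 1 := by
      have : (1 : ℚ_[p]) - (-1) = 2 := by ring
      rwa [this] at hqp
    have h2' : ‖((2 : ℤ) : ℚ_[p])‖ < 1 := by exact_mod_cast this
    rw [Padic.norm_intCast_lt_one_iff] at h2'
    have hp2 : p ∣ 2 := by exact_mod_cast h2'
    have hpe : p = 2 := (Nat.prime_dvd_prime_iff_eq Fact.out Nat.prime_two).mp hp2
    rw [hpe] at hp
    simp [Nat.odd_iff] at hp
  -- composition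
  have hsub : Tendsto (fun N : ℕ => N - 1) atTop atTop := tendsto_sub_atTop_nat 1
  have hcomp : Tendsto (fun N : ℕ =>
      ((1 + q) / (1 + q ^ p)) *
        (((1 + q ^ p) / (1 - (-q ^ p) ^ (p ^ (N - 1)))) *
          ∑ y ∈ range (p ^ (N - 1)), f ((p : ℤ_[p]) * (y : ℤ_[p])) * (-q ^ p) ^ y))
      atTop (nhds (((1 + q) / (1 + q ^ p)) * J)) :=
    (hJ.comp hsub).const_mul _
  refine hcomp.congr' ?_
  filter_upwards [eventually_ge_atTop 1] with N hN
  have hNe : p ^ N = p * p ^ (N - 1) := by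
    conv_lhs => rw [show N = 1 + (N - 1) by omega]
    rw [pow_add, pow_one]
  have hnegpow : (-q) ^ p = -q ^ p := Odd.neg_pow hp q
  have hbase : (-q) ^ (p ^ N) = (-q ^ p) ^ (p ^ (N - 1)) := by
    rw [hNe, pow_mul, hnegpow]
  have hsumeq : ∀ y : ℕ, (-q) ^ (p * y) = (-q ^ p) ^ y := fun y => by
    rw [pow_mul, hnegpow]
  rw [← mul_assoc, div_mul_div_comm, mul_comm (1 + q) (1 + q ^ p),
    mul_div_mul_left _ _ h2, ← hbase]
  exact congrArg _ (Finset.sum_congr rfl fun y _ => by rw [hsumeq y])
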